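/- Let (V, Q) be a closure system satisfying (I₀) and π ∈ D(V, Q). Then π is completely join-irreducible in D(V, Q) if and only if π = π_A for some nonempty A ∈ Q such that the restricted closure system (A, Q_A) admits a greatest proper decomposition. -/
import Mathlib


variable {V : Type*}

/-- `Q` is a closure system on `V`: it contains `V` and is closed under
intersections of nonempty subfamilies. -/
def IsClosureSystem (Q : Set (Set V)) : Prop :=
  Set.univ ∈ Q ∧ ∀ F ⊆ Q, F.Nonempty → ⋂₀ F ∈ Q

/-- Algebraic: the union of any nonempty chain of closed sets is closed. -/
def IsAlgebraicSystem (Q : Set (Set V)) : Prop :=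
  ∀ C ⊆ Q, C.Nonempty → IsChain (· ⊆ ·) C → ⋃₀ C ∈ Q

/-- Condition (I₀): the empty set and all singletons are closed. -/
def CondI0 (Q : Set (Set V)) : Prop := ∅ ∈ Q ∧ ∀ x : V, {x} ∈ Q

/-- Condition (I₁): the union of two intersecting members is a member. -/
def CondI1 (Q : Set (Set V)) : Prop :=
  ∀ A ∈ Q, ∀ B ∈ Q, (A ∩ B).Nonempty → A ∪ B ∈ Q

/-- Condition (I₂): differences of properly overlapping members are members. -/
def CondI2 (Q : Set (Set V)) : Prop :=
  ∀ A ∈ Q, ∀ B ∈ Q, (A ∩ B).Nonempty → ¬ A ⊆ B → ¬ B ⊆ A → A \ B ∈ Q ∧ B \ A ∈ Q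

/-- An interval system: an algebraic closure system satisfying (I₀), (I₁), (I₂). -/
def IsIntervalSystem (Q : Set (Set V)) : Prop :=
  IsClosureSystem Q ∧ IsAlgebraicSystem Q ∧ CondI0 Q ∧ CondI1 Q ∧ CondI2 Q

/-- `A` is a strong set of the closure system `Q`. -/
def IsStrong (Q : Set (Set V)) (A : Set V) : Prop :=
  A ∈ Q ∧ ∀ B ∈ Q, (A ∩ B).Nonempty → A ⊆ B ∨ B ⊆ A

/-- A decomposition: a partition of `V` (coded as a setoid) all of whose
blocks belong to `Q`.  The refinement order on partitions corresponds to the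
order on `Setoid V` (finer below). -/
def IsDecomp (Q : Set (Set V)) (π : Setoid V) : Prop :=
  ∀ x : V, {y | π.r x y} ∈ Q

/-- The lattice `D(V,Q)` of decompositions, as a subtype of `Setoid V`
with the induced (refinement) partial order. -/
abbrev Decomp (Q : Set (Set V)) := {π : Setoid V // IsDecomp Q π}

/-- `π_A`: the partition with block `A` and all other blocks singletons. -/
def piA (A : Set V) : Setoid V :=
  ⟨fun a b => a = b ∨ (a ∈ A ∧ b ∈ A), by
    constructor
    · intro a; exact Or.inl rfl
    · intro a b h; aesop
    · intro a b c h1 h2; aesop⟩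

/-- A decomposition of `A` in the restricted closure system `(A, Q_A)`,
`Q_A = {C ∩ A | C ∈ Q}`: a partition of `A` all of whose blocks are of the
form `C ∩ A` with `C ∈ Q`. -/
def IsRestDecomp (Q : Set (Set V)) (A : Set V) (μ : Setoid ↥A) : Prop :=
  ∀ x : ↥A, ∃ C ∈ Q, Subtype.val '' {y | μ.r x y} = C ∩ A

/-- `μ` is a greatest proper decomposition of `A` in `(A, Q_A)`: it is proper
(different from `{A}`, i.e. `μ ≠ ⊤`) and every proper decomposition of `A`
refines it. -/
def IsGreatestProperDecomp (Q : Set (Set V)) (A : Set V) (μ : Setoid ↥A) : Prop :=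
  IsRestDecomp Q A μ ∧ μ ≠ ⊤ ∧
    ∀ ν : Setoid ↥A, IsRestDecomp Q A ν → ν ≠ ⊤ → ν ≤ μ

/-- `π` is completely join-irreducible in the lattice `D(V,Q)`: it is not the
least decomposition `Δ` and whenever it is the join (least upper bound within
`D(V,Q)`) of a family of decompositions, it is one of them. -/
def IsCJI (Q : Set (Set V)) (π : Decomp Q) : Prop :=
  π.1 ≠ ⊥ ∧ ∀ S : Set (Decomp Q), IsLUB S π → π ∈ S

namespace Stmt9Aux

lemma mem_inter {Q : Set (Set V)} (hC : IsClosureSystem Q) {B C : Set V}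
    (hB : B ∈ Q) (hCm : C ∈ Q) : B ∩ C ∈ Q := by
  have h := hC.2 {B, C} (by rintro x (rfl | rfl) <;> assumption) ⟨B, by simp⟩
  simpa using h

lemma rel_of_top {A : Type*} {r : Setoid A} (h : r = ⊤) (a b : A) : r.r a b := by
  rw [h]; trivial

lemma exists_not_rel {A : Type*} {r : Setoid A} (h : r ≠ ⊤) : ∃ a b, ¬ r.r a b := by
  by_contra hc
  push_neg at hc
  exact h (Setoid.eq_top_iff.mpr hc)

lemma exists_rel_ne {r : Setoid V} (h : r ≠ ⊥) : ∃ a b, r.r a b ∧ a ≠ b := by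
  by_contra hc
  push_neg at hc
  refine h (Setoid.ext fun a b => ⟨fun hr => hc a b hr, fun he => he ▸ r.refl a⟩)

/-- extend a setoid on `↥A` to `V` by singletons outside `A`. -/
def extendS (A : Set V) (μ : Setoid ↥A) : Setoid V :=
  ⟨fun x y => x = y ∨ ∃ hx : x ∈ A, ∃ hy : y ∈ A, μ.r ⟨x, hx⟩ ⟨y, hy⟩, by
    constructor
    · intro x; exact Or.inl rfl
    · rintro x y (rfl | ⟨hx, hy, h⟩)
      · exact Or.inl rfl
      · exact Or.inr ⟨hy, hx, μ.symm h⟩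
    · rintro x y z (rfl | ⟨hx, hy, h⟩) h2
      · exact h2
      · rcases h2 with rfl | ⟨hy', hz, h'⟩
        · exact Or.inr ⟨hx, hy, h⟩
        · exact Or.inr ⟨hx, hz, μ.trans h h'⟩⟩

/-- restrict a setoid on `V` to `↥A`. -/
def restrictS (A : Set V) (σ : Setoid V) : Setoid ↥A :=
  ⟨fun a b => σ.r a b, by
    constructor
    · intro a; exact σ.refl _
    · intro a b h; exact σ.symm h
    · intro a b c h1 h2; exact σ.trans h1 h2⟩

lemma restrict_extend {A : Set V} (μ : Setoid ↥A) : restrictS A (extendS A μ) = μ := by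
  refine Setoid.ext fun a b => ?_
  constructor
  · rintro (hab | ⟨hx, hy, h⟩)
    · exact (Subtype.ext hab) ▸ μ.refl a
    · exact h
  · intro h
    exact Or.inr ⟨a.2, b.2, h⟩

lemma extendS_class_mem {A : Set V} (μ : Setoid ↥A) {x : V} (hx : x ∈ A) :
    {y | (extendS A μ).r x y} = Subtype.val '' {y | μ.r ⟨x, hx⟩ y} := by
  ext y
  simp only [Set.mem_setOf_eq, Set.mem_image]
  constructor
  · rintro (rfl | ⟨hx', hy, h⟩)
    · exact ⟨⟨x, hx⟩, μ.refl _, rfl⟩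
    · exact ⟨⟨y, hy⟩, h, rfl⟩
  · rintro ⟨⟨y', hy'⟩, h, rfl⟩
    exact Or.inr ⟨hx, hy', h⟩

lemma extendS_class_not_mem {A : Set V} (μ : Setoid ↥A) {x : V} (hx : x ∉ A) :
    {y | (extendS A μ).r x y} = {x} := by
  ext y
  simp only [Set.mem_setOf_eq, Set.mem_singleton_iff]
  constructor
  · rintro (rfl | ⟨hx', _, _⟩)
    · rfl
    · exact absurd hx' hx
  · rintro rfl; exact Or.inl rfl

lemma extendS_isDecomp {Q : Set (Set V)} (hC : IsClosureSystem Q) (h0 : CondI0 Q)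
    {A : Set V} (hA : A ∈ Q) {μ : Setoid ↥A} (hμ : IsRestDecomp Q A μ) :
    IsDecomp Q (extendS A μ) := by
  intro x
  by_cases hx : x ∈ A
  · rw [extendS_class_mem μ hx]
    obtain ⟨C, hCQ, hCeq⟩ := hμ ⟨x, hx⟩
    rw [hCeq]; exact mem_inter hC hCQ hA
  · rw [extendS_class_not_mem μ hx]; exact h0.2 x

lemma extendS_le_piA {A : Set V} (μ : Setoid ↥A) : extendS A μ ≤ piA A := by
  rw [Setoid.le_def]
  rintro x y (rfl | ⟨hx, hy, _⟩)
  · exact Or.inl rfl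
  · exact Or.inr ⟨hx, hy⟩

lemma restrict_isRestDecomp {Q : Set (Set V)} {A : Set V} {σ : Setoid V}
    (hσ : IsDecomp Q σ) : IsRestDecomp Q A (restrictS A σ) := by
  intro x
  refine ⟨{y | σ.r x y}, hσ x, ?_⟩
  ext y
  simp only [Set.mem_image, Set.mem_setOf_eq, Set.mem_inter_iff]
  constructor
  · rintro ⟨⟨y', hy'⟩, h, rfl⟩
    exact ⟨h, hy'⟩
  · rintro ⟨h, hy⟩
    exact ⟨⟨y, hy⟩, h, rfl⟩

lemma restrict_mono {A : Set V} {σ τ : Setoid V} (h : σ ≤ τ) :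
    restrictS A σ ≤ restrictS A τ := by
  rw [Setoid.le_def] at h ⊢
  intro a b hab
  exact h hab

lemma le_extendS {A : Set V} {σ : Setoid V} {μ : Setoid ↥A}
    (hle : σ ≤ piA A) (hres : restrictS A σ ≤ μ) : σ ≤ extendS A μ := by
  rw [Setoid.le_def] at hle hres ⊢
  intro x y hxy
  rcases hle hxy with rfl | ⟨hx, hy⟩
  · exact Or.inl rfl
  · exact Or.inr ⟨hx, hy, hres (show σ.r (⟨x, hx⟩ : ↥A) (⟨y, hy⟩ : ↥A) from hxy)⟩

lemma eq_piA_of_restrict_top {A : Set V} {σ : Setoid V} (hle : σ ≤ piA A)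
    (htop : restrictS A σ = ⊤) : σ = piA A := by
  refine le_antisymm hle ?_
  rw [Setoid.le_def]
  rintro x y (rfl | ⟨hx, hy⟩)
  · exact σ.refl x
  · exact rel_of_top htop (⟨x, hx⟩ : ↥A) ⟨y, hy⟩

lemma piA_class_mem {A : Set V} {x : V} (hx : x ∈ A) : {y | (piA A).r x y} = A := by
  ext y
  simp only [Set.mem_setOf_eq]
  constructor
  · rintro (rfl | ⟨_, hy⟩)
    · exact hx
    · exact hy
  · intro hy; exact Or.inr ⟨hx, hy⟩

lemma piA_class_not_mem {A : Set V} {x : V} (hx : x ∉ A) : {y | (piA A).r x y} = {x} := by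
  ext y
  simp only [Set.mem_setOf_eq, Set.mem_singleton_iff]
  constructor
  · rintro (rfl | ⟨hx', _⟩)
    · rfl
    · exact absurd hx' hx
  · rintro rfl; exact Or.inl rfl

lemma piA_isDecomp {Q : Set (Set V)} (h0 : CondI0 Q) {A : Set V} (hA : A ∈ Q) :
    IsDecomp Q (piA A) := by
  intro x
  by_cases hx : x ∈ A
  · rw [piA_class_mem hx]; exact hA
  · rw [piA_class_not_mem hx]; exact h0.2 x

lemma inf_isDecomp {Q : Set (Set V)} (hC : IsClosureSystem Q) {σ τ : Setoid V}
    (hσ : IsDecomp Q σ) (hτ : IsDecomp Q τ) : IsDecomp Q (σ ⊓ τ) := by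
  intro x
  have h : {y | (σ ⊓ τ).r x y} = {y | σ.r x y} ∩ {y | τ.r x y} := rfl
  rw [h]; exact mem_inter hC (hσ x) (hτ x)

end Stmt9Aux


/-- For a closure system satisfying (I₀), a decomposition `π` is completely
join-irreducible in `D(V,Q)` iff `π = π_A` for some nonempty closed set `A`
admitting a greatest proper decomposition in `(A, Q_A)`. -/
theorem stmt9 (Q : Set (Set V)) (hC : IsClosureSystem Q) (h0 : CondI0 Q)
    (π : Decomp Q) :
    IsCJI Q π ↔
      ∃ A ∈ Q, A.Nonempty ∧ π.1 = piA A ∧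
        ∃ μ : Setoid ↥A, IsGreatestProperDecomp Q A μ := by
  constructor
  · -- forward
    rintro ⟨hbot, hcji⟩
    -- the set of strictly finer decompositions
    set S : Set (Decomp Q) := {σ | σ.1 ≤ π.1 ∧ σ ≠ π} with hSdef
    have hub : π ∈ upperBounds S := fun σ hσ => hσ.1
    have hnlub : ¬ IsLUB S π := fun h => (hcji S h).2 rfl
    have hex : ∃ τ ∈ upperBounds S, ¬ π ≤ τ := by
      by_contra hcon
      push_neg at hcon
      exact hnlub ⟨hub, fun τ hτ => hcon τ hτ⟩
    obtain ⟨τ, hτub, hτ⟩ := hex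
    have hτ' : ¬ π.1 ≤ τ.1 := hτ
    set σ₀ : Decomp Q := ⟨π.1 ⊓ τ.1, Stmt9Aux.inf_isDecomp hC π.2 τ.2⟩ with hσ₀def
    have hσ₀le : σ₀.1 ≤ π.1 := inf_le_left
    have hσ₀ne : σ₀.1 ≠ π.1 := by
      intro heq
      exact hτ' (heq ▸ inf_le_right)
    have hσ₀ub : ∀ σ ∈ S, σ.1 ≤ σ₀.1 := by
      intro σ hσ
      exact le_inf hσ.1 (hτub hσ)
    -- a nontrivial block
    obtain ⟨a, b, hab, hne⟩ := Stmt9Aux.exists_rel_ne hbot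
    set A : Set V := {y | π.1.r a y} with hAdef
    have hAQ : A ∈ Q := π.2 a
    have haA : a ∈ A := π.1.refl a
    have hbA : b ∈ A := hab
    -- piA of any block is ≤ π
    have hblockle : ∀ u : V, piA {y | π.1.r u y} ≤ π.1 := by
      intro u
      rw [Setoid.le_def]
      rintro x y (rfl | ⟨hx, hy⟩)
      · exact π.1.refl x
      · exact π.1.trans (π.1.symm hx) hy
    have hpiAle : piA A ≤ π.1 := hblockle a
    -- π ≤ piA A
    have hle : π.1 ≤ piA A := by
      by_contra hcon
      have hcon' : ¬ ∀ x y, π.1.r x y → (piA A).r x y :=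
        fun h => hcon (Setoid.le_def.mpr fun {x y} => h x y)
      push_neg at hcon'
      obtain ⟨x, y, hxy, hnxy⟩ := hcon'
      have hnxy' : ¬ (x = y ∨ (x ∈ A ∧ y ∈ A)) := hnxy
      push_neg at hnxy'
      obtain ⟨hxney, hnand⟩ := hnxy'
      have hxA : x ∉ A := by
        intro hxA
        have hyA : y ∈ A := π.1.trans hxA hxy
        exact hnand hxA hyA
      -- show π.1 ≤ σ₀.1, contradiction
      have hππ : π.1 ≤ σ₀.1 := by
        rw [Setoid.le_def]
        intro u v huv
        by_cases huv' : u = v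
        · exact huv' ▸ σ₀.1.refl u
        · set B : Set V := {y | π.1.r u y} with hBdef
          have hBQ : B ∈ Q := π.2 u
          by_cases hBA : (B ∩ A).Nonempty
          · -- B = A
            obtain ⟨z, hzB, hzA⟩ := hBA
            have hua : π.1.r u a := π.1.trans hzB (π.1.symm hzA)
            have huA : u ∈ A := π.1.symm hua
            have hvA : v ∈ A := π.1.trans (π.1.symm hua) huv
            -- piA A ∈ S
            have hpiAne : (piA A : Setoid V) ≠ π.1 := by
              intro heq
              exact hnxy (heq ▸ hxy)
            have hmem : (⟨piA A, Stmt9Aux.piA_isDecomp h0 hAQ⟩ : Decomp Q) ∈ S :=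
              ⟨hpiAle, fun h => hpiAne (congrArg Subtype.val h)⟩
            have := hσ₀ub _ hmem
            exact Setoid.le_def.mp this (Or.inr ⟨huA, hvA⟩)
          · -- B disjoint from A
            have hpiBne : (piA B : Setoid V) ≠ π.1 := by
              intro heq
              have : (piA B).r a b := heq ▸ hab
              rcases this with h' | ⟨haB, _⟩
              · exact hne h'
              · exact hBA ⟨a, haB, haA⟩
            have hmem : (⟨piA B, Stmt9Aux.piA_isDecomp h0 hBQ⟩ : Decomp Q) ∈ S :=
              ⟨hblockle u, fun h => hpiBne (congrArg Subtype.val h)⟩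
            have := hσ₀ub _ hmem
            exact Setoid.le_def.mp this (Or.inr ⟨π.1.refl u, huv⟩)
      exact hσ₀ne (le_antisymm hσ₀le hππ)
    have hπA : π.1 = piA A := le_antisymm hle hpiAle
    refine ⟨A, hAQ, ⟨a, haA⟩, hπA, Stmt9Aux.restrictS A σ₀.1, ?_, ?_, ?_⟩
    · exact Stmt9Aux.restrict_isRestDecomp σ₀.2
    · intro htop
      exact hσ₀ne (hπA ▸ Stmt9Aux.eq_piA_of_restrict_top (hπA ▸ hσ₀le) htop)
    · intro ν hν hνtop
      have hd : IsDecomp Q (Stmt9Aux.extendS A ν) := Stmt9Aux.extendS_isDecomp hC h0 hAQ hν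
      have hle1 : Stmt9Aux.extendS A ν ≤ π.1 := hπA ▸ Stmt9Aux.extendS_le_piA ν
      have hne1 : (⟨Stmt9Aux.extendS A ν, hd⟩ : Decomp Q) ≠ π := by
        intro heq
        have heq' : Stmt9Aux.extendS A ν = piA A := hπA ▸ congrArg Subtype.val heq
        have : ν = Stmt9Aux.restrictS A (piA A) := by
          rw [← heq', Stmt9Aux.restrict_extend]
        refine hνtop (this.trans ?_)
        refine Setoid.eq_top_iff.mpr fun p q => ?_
        exact Or.inr ⟨p.2, q.2⟩
      have hmem : (⟨Stmt9Aux.extendS A ν, hd⟩ : Decomp Q) ∈ S := ⟨hle1, hne1⟩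
      have h2 := hσ₀ub _ hmem
      calc ν = Stmt9Aux.restrictS A (Stmt9Aux.extendS A ν) :=
              (Stmt9Aux.restrict_extend ν).symm
        _ ≤ Stmt9Aux.restrictS A σ₀.1 := Stmt9Aux.restrict_mono h2
  · -- backward
    rintro ⟨A, hAQ, hAne, hπA, μ, hμrd, hμtop, hμgr⟩
    obtain ⟨p, q, hpq⟩ := Stmt9Aux.exists_not_rel hμtop
    constructor
    · intro hbot
      have hr : π.1.r (p : V) (q : V) := by
        rw [hπA]; exact Or.inr ⟨p.2, q.2⟩
      rw [hbot] at hr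
      have : p = q := Subtype.ext hr
      exact hpq (this ▸ μ.refl p)
    · intro S hlub
      by_contra hmem
      have hd : IsDecomp Q (Stmt9Aux.extendS A μ) := Stmt9Aux.extendS_isDecomp hC h0 hAQ hμrd
      have hub : (⟨Stmt9Aux.extendS A μ, hd⟩ : Decomp Q) ∈ upperBounds S := by
        intro σ hσ
        have hσle : σ.1 ≤ piA A := hπA ▸ hlub.1 hσ
        have hσne : σ ≠ π := fun h => hmem (h ▸ hσ)
        have hres : Stmt9Aux.restrictS A σ.1 ≠ ⊤ := by
          intro htop
          exact hσne (Subtype.ext ((Stmt9Aux.eq_piA_of_restrict_top hσle htop).trans hπA.symm))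
        have hres2 : Stmt9Aux.restrictS A σ.1 ≤ μ :=
          hμgr _ (Stmt9Aux.restrict_isRestDecomp σ.2) hres
        exact Stmt9Aux.le_extendS hσle hres2
      have hππ : π.1 ≤ Stmt9Aux.extendS A μ := hlub.2 hub
      have hr : (Stmt9Aux.extendS A μ).r (p : V) (q : V) :=
        Setoid.le_def.mp hππ (by rw [hπA]; exact Or.inr ⟨p.2, q.2⟩)
      rcases hr with h | ⟨hx, hy, h⟩
      · exact hpq ((Subtype.ext h) ▸ μ.refl p)
      · exact hpq h
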